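/- For natural number b ≥ 1 and nonnegative integer i, the Pochhammer ratio (3/2 - b)_i / (b)_i equals (-1)^{b+1} · ((2(b-1))! / 2^{b-1}) / [(2i-1)(2i-3)···(2i-2(b-1)+1) · (i+1)(i+2)···(i+b-1)] · C(2i,i) / 4^i, whenever the denominator is nonzero. -/

import Mathlib

open Real Finset

noncomputable def pochR (a : ℝ) : ℕ → ℝ
  | 0 => 1
  | (n+1) => pochR a n * (a + n)

lemma pochR_pos {a : ℝ} (ha : 0 < a) (i : ℕ) : 0 < pochR a i := by
  induction i with
  | zero => norm_num [pochR]
  | succ n ih => exact mul_pos ih (by positivity)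

lemma pochR_shift (c : ℝ) (i : ℕ) : pochR c i * (c + i) = c * pochR (c+1) i := by
  induction i with
  | zero => simp [pochR]
  | succ n ih =>
      simp only [pochR]
      push_cast
      linear_combination (c + (n:ℝ) + 1) * ih

lemma pochR_one (i : ℕ) : pochR 1 i = i.factorial := by
  induction i with
  | zero => simp [pochR]
  | succ n ih => simp [pochR, ih, Nat.factorial_succ]; ring

lemma half_poch (i : ℕ) : pochR (1/2) i * 4^i * i.factorial = (2*i).factorial := by
  induction i with
  | zero => simp [pochR]
  | succ n ih =>
      have h2 : 2 * (n+1) = (2*n + 1) + 1 := by ring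
      rw [h2, Nat.factorial_succ, Nat.factorial_succ]
      simp only [pochR, Nat.factorial_succ]
      push_cast
      linear_combination ((1/2 + (n:ℝ)) * 4 * ((n:ℝ)+1)) * ih

lemma choose_cast (i : ℕ) : ((2*i).choose i : ℝ) * i.factorial * i.factorial = (2*i).factorial := by
  have h : (2*i).choose i * i.factorial * (2*i - i).factorial = (2*i).factorial :=
    Nat.choose_mul_factorial_mul_factorial (by omega)
  rw [show 2*i - i = i from by omega] at h
  exact_mod_cast h

lemma aux (i : ℕ) (m : ℕ) :
    pochR (3/2 - ((m:ℝ)+1)) i * (∏ j ∈ Finset.range m, ((2 * i : ℝ) - (2 * j + 1))) *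
      (∏ j ∈ Finset.range m, ((i : ℝ) + j + 1)) * 4^i * 2^m
    = (-1)^m * (Nat.factorial (2*m) : ℝ) * ((2*i).choose i : ℝ) * pochR ((m:ℝ)+1) i := by
  induction m with
  | zero =>
      simp only [Finset.range_zero, Finset.prod_empty, pow_zero]
      have h1 := half_poch i
      have h2 := choose_cast i
      have h3 := pochR_one i
      have hfac : (i.factorial : ℝ) ≠ 0 := by positivity
      norm_num [h3]
      exact mul_right_cancel₀ hfac (h1.trans h2.symm)
  | succ m ih =>
      have hs1 := pochR_shift (1/2 - ((m:ℝ)+1)) i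
      have hs2 := pochR_shift ((m:ℝ)+1) i
      rw [Finset.prod_range_succ, Finset.prod_range_succ]
      have hc1 : (3/2 - ((m:ℝ)+1+1)) = (1/2 - ((m:ℝ)+1)) := by ring
      have hc2 : ((1/2 - ((m:ℝ)+1)) + 1) = 3/2 - ((m:ℝ)+1) := by ring
      have hfac : (Nat.factorial (2*(m+1)) : ℝ) = (2*m+2) * (2*m+1) * Nat.factorial (2*m) := by
        have : 2*(m+1) = (2*m+1)+1 := by ring
        rw [this, Nat.factorial_succ, Nat.factorial_succ]
        push_cast; ring
      rw [hc2] at hs1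
      push_cast
      rw [hc1, hfac]
      linear_combination
        (4 * (∏ j ∈ Finset.range m, ((2*i:ℝ) - (2*j+1))) *
          (∏ j ∈ Finset.range m, ((i:ℝ)+j+1)) * ((i:ℝ)+m+1) * 4^i * 2^m) * hs1
        - (4*(m:ℝ)+2) * ((i:ℝ)+m+1) * ih
        - 2*(2*(m:ℝ)+1) * (-1)^m * ((Nat.factorial (2*m)) : ℝ) * (((2*i).choose i) : ℝ) * hs2

theorem stmt10 (b : ℕ) (hb : 1 ≤ b) (i : ℕ)
    (hden : (∏ j ∈ Finset.range (b-1), ((2 * i : ℝ) - (2 * j + 1))) ≠ 0) :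
    pochR (3/2 - b) i / pochR b i
    = (-1) ^ (b + 1) * ((Nat.factorial (2 * (b - 1)) : ℝ) / 2 ^ (b - 1)) /
        ((∏ j ∈ Finset.range (b-1), ((2 * i : ℝ) - (2 * j + 1))) *
          ∏ j ∈ Finset.range (b-1), ((i : ℝ) + j + 1))
        * (Nat.choose (2*i) i : ℝ) / 4 ^ i := by
  obtain ⟨m, rfl⟩ : ∃ m, b = m + 1 := ⟨b - 1, by omega⟩
  simp only [Nat.add_sub_cancel] at *
  have key := aux i m
  have hpos : 0 < pochR ((m:ℝ)+1) i := pochR_pos (by positivity) i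
  have hd2 : (0:ℝ) < ∏ j ∈ Finset.range m, ((i : ℝ) + j + 1) := by
    apply Finset.prod_pos; intro j _; positivity
  have hsign : ((-1:ℝ))^(m+1+1) = (-1)^m := by
    rw [pow_succ, pow_succ]; ring
  push_cast
  rw [hsign]
  set X : ℝ := pochR (3/2 - ((m:ℝ)+1)) i with hX
  set Y : ℝ := pochR ((m:ℝ)+1) i with hY
  have hQ : Y ≠ 0 := ne_of_gt hpos
  have hD2 : (∏ j ∈ Finset.range m, ((i : ℝ) + j + 1)) ≠ 0 := ne_of_gt hd2
  have h4 : (4:ℝ)^i ≠ 0 := by positivity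
  have h2 : (2:ℝ)^m ≠ 0 := by positivity
  field_simp
  linear_combination key
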